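/- The Boeckx invariant I_M = (1 - μ/2)/√(1-κ) is invariant under D_a-homothetic deformations: with κ̄ = (κ + a² - 1)/a² and μ̄ = (μ + 2a - 2)/a, one has (1 - μ̄/2)/√(1-κ̄) = (1 - μ/2)/√(1-κ). -/

import Mathlib

/-- The Boeckx invariant `I_M = (1 - μ/2)/√(1-κ)` is invariant
under `D_a`-homothetic deformations: with `κ̄ = (κ + a² - 1)/a²` and
`μ̄ = (μ + 2a - 2)/a`, one has `(1 - μ̄/2)/√(1-κ̄) = (1 - μ/2)/√(1-κ)`. -/
theorem boeckx_invariant_deformation_invariant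
    (κ μ a : ℝ) (hκ : κ < 1) (ha : 0 < a) :
    (1 - ((μ + 2*a - 2)/a)/2) / Real.sqrt (1 - (κ + a^2 - 1)/a^2) =
      (1 - μ/2) / Real.sqrt (1 - κ) := by
  have ha0 : a ≠ 0 := ha.ne'
  have h1 : 1 - (κ + a^2 - 1)/a^2 = (1 - κ)/a^2 := by field_simp; ring
  rw [h1, Real.sqrt_div' _ (by positivity), Real.sqrt_sq ha.le]
  have h2 : 1 - ((μ + 2*a - 2)/a)/2 = (1 - μ/2)/a := by field_simp; ring
  rw [h2]
  have hs : Real.sqrt (1 - κ) ≠ 0 := ne_of_gt (Real.sqrt_pos.mpr (by linarith))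
  field_simp
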